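/- Let Φ : ℝⁿ → ℝⁿ be Borel measurable and shape-preserving with constant K (i.e., for every cube Q there exist cubes Q_small ⊂ Φ⁻¹(Q) ⊂ Q_big with ℓ(Q_big)/ℓ(Q_small) ≤ K). Then the following are equivalent: (1) there exists C₁ > 0 such that |Φ⁻¹(Q)| ≤ C₁|Q| for every cube Q; (2) there exists C > 0 such that A₂(Φ_*σ, Φ_*ω) ≤ C·A₂(σ,ω) for all pairs of locally finite positive Borel measures σ, ω. Moreover, in the forward direction the constant is C = C₁²K^{2n}. -/

import Mathlib

open MeasureTheory Set ENNReal NNReal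

/-- The axis-parallel cube in `ℝⁿ` with lower corner `c` and side length `r`. -/
def euCube {n : ℕ} (c : EuclideanSpace ℝ (Fin n)) (r : ℝ) : Set (EuclideanSpace ℝ (Fin n)) :=
  {x | ∀ i, c i ≤ x i ∧ x i ≤ c i + r}

/-- `A₂(σ,ω) = sup_Q (σ(Q)/|Q|)(ω(Q)/|Q|)` over all axis-parallel cubes `Q`. -/
noncomputable def A2char {n : ℕ} (σ ω : Measure (EuclideanSpace ℝ (Fin n))) : ℝ≥0∞ :=
  ⨆ (c : EuclideanSpace ℝ (Fin n)) (r : ℝ) (_ : 0 < r),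
    (σ (euCube c r) / volume (euCube c r)) * (ω (euCube c r) / volume (euCube c r))

lemma euCube_eq {n : ℕ} (c : EuclideanSpace ℝ (Fin n)) (r : ℝ) :
    euCube c r = ((MeasurableEquiv.toLp 2 (Fin n → ℝ)).symm) ⁻¹'
      (Set.univ.pi fun i => Icc (c i) (c i + r)) := by
  ext x
  simp [euCube, Set.mem_pi, Pi.le_def, forall_and]

lemma measurableSet_euCube {n : ℕ} (c : EuclideanSpace ℝ (Fin n)) (r : ℝ) :
    MeasurableSet (euCube c r) := by
  rw [euCube_eq]
  exact (MeasurableEquiv.toLp 2 (Fin n → ℝ)).symm.measurable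
    (MeasurableSet.univ_pi fun i => measurableSet_Icc)

lemma vol_euCube {n : ℕ} (c : EuclideanSpace ℝ (Fin n)) (r : ℝ) :
    volume (euCube c r) = ENNReal.ofReal r ^ n := by
  rw [euCube_eq, (EuclideanSpace.volume_preserving_symm_measurableEquiv_toLp (Fin n)).measure_preimage
    ((MeasurableSet.univ_pi fun i => measurableSet_Icc).nullMeasurableSet)]
  rw [volume_pi_pi]
  simp

lemma vol_euCube_ne_zero {n : ℕ} (c : EuclideanSpace ℝ (Fin n)) {r : ℝ} (hr : 0 < r) :
    volume (euCube c r) ≠ 0 := by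
  rw [vol_euCube]
  exact pow_ne_zero _ (ENNReal.ofReal_pos.mpr hr).ne'

lemma vol_euCube_ne_top {n : ℕ} (c : EuclideanSpace ℝ (Fin n)) (r : ℝ) :
    volume (euCube c r) ≠ ⊤ := by
  rw [vol_euCube]
  exact ENNReal.pow_ne_top ofReal_ne_top

/-- Let `Φ : ℝⁿ → ℝⁿ` be Borel measurable and shape-preserving with constant `K`.  Then:
(a) if `|Φ⁻¹(Q)| ≤ C₁|Q|` for every cube `Q`, then `A₂(Φ_*σ, Φ_*ω) ≤ C₁²K^{2n}·A₂(σ,ω)`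
for all pairs of locally finite positive Borel measures; and (b) conversely, if such an
`A₂`-stability bound holds with some constant, then there is `C₁ > 0` with
`|Φ⁻¹(Q)| ≤ C₁|Q|` for every cube `Q`. -/
theorem stmt12 (n : ℕ) (Φ : EuclideanSpace ℝ (Fin n) → EuclideanSpace ℝ (Fin n))
    (hΦ : Measurable Φ) (K : ℝ≥0) (hK : 1 ≤ K)
    (hshape : ∀ (c : EuclideanSpace ℝ (Fin n)) (r : ℝ), 0 < r →
      ∃ (c₁ : EuclideanSpace ℝ (Fin n)) (r₁ : ℝ) (c₂ : EuclideanSpace ℝ (Fin n)) (r₂ : ℝ),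
        0 < r₁ ∧ euCube c₁ r₁ ⊆ Φ ⁻¹' (euCube c r) ∧ Φ ⁻¹' (euCube c r) ⊆ euCube c₂ r₂ ∧
        r₂ ≤ (K : ℝ) * r₁) :
    (∀ C₁ : ℝ≥0∞, 0 < C₁ →
      (∀ (c : EuclideanSpace ℝ (Fin n)) (r : ℝ), 0 < r →
        volume (Φ ⁻¹' (euCube c r)) ≤ C₁ * volume (euCube c r)) →
      ∀ (σ ω : Measure (EuclideanSpace ℝ (Fin n))),
        IsLocallyFiniteMeasure σ → IsLocallyFiniteMeasure ω →
        A2char (Measure.map Φ σ) (Measure.map Φ ω) ≤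
          C₁ ^ 2 * (K : ℝ≥0∞) ^ (2 * n) * A2char σ ω) ∧
    ((∃ C : ℝ≥0∞, 0 < C ∧ C < ⊤ ∧
        ∀ (σ ω : Measure (EuclideanSpace ℝ (Fin n))),
          IsLocallyFiniteMeasure σ → IsLocallyFiniteMeasure ω →
          A2char (Measure.map Φ σ) (Measure.map Φ ω) ≤ C * A2char σ ω) →
      ∃ C₁ : ℝ≥0∞, 0 < C₁ ∧ C₁ < ⊤ ∧
        ∀ (c : EuclideanSpace ℝ (Fin n)) (r : ℝ), 0 < r →
          volume (Φ ⁻¹' (euCube c r)) ≤ C₁ * volume (euCube c r)) := by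
  constructor
  · -- part (a)
    intro C₁ hC₁ hvol σ ω _ _
    refine iSup_le fun c => iSup_le fun r => iSup_le fun hr => ?_
    obtain ⟨c₁, r₁, c₂, r₂, hr₁, hsub₁, hsub₂, hKr⟩ := hshape c r hr
    set r₂' := max r₂ r₁ with hr₂'def
    have hr₂'pos : 0 < r₂' := lt_max_of_lt_right hr₁
    have hsub₂' : Φ ⁻¹' (euCube c r) ⊆ euCube c₂ r₂' := fun x hx => fun i =>
      ⟨(hsub₂ hx i).1, le_trans (hsub₂ hx i).2 (by unfold r₂'; gcongr; exact le_max_left _ _)⟩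
    have hKr' : r₂' ≤ (K : ℝ) * r₁ :=
      max_le hKr (le_mul_of_one_le_left hr₁.le (by exact_mod_cast hK))
    set Q := euCube c r with hQdef
    set Q2 := euCube c₂ r₂' with hQ2def
    have hvQ0 : volume Q ≠ 0 := vol_euCube_ne_zero c hr
    have hvQtop : volume Q ≠ ⊤ := vol_euCube_ne_top c r
    have hvQ20 : volume Q2 ≠ 0 := vol_euCube_ne_zero c₂ hr₂'pos
    have hvQ2top : volume Q2 ≠ ⊤ := vol_euCube_ne_top c₂ r₂'
    -- volume chain
    have hchain : volume Q2 ≤ (K : ℝ≥0∞) ^ n * C₁ * volume Q := by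
      calc volume Q2 = ENNReal.ofReal r₂' ^ n := vol_euCube c₂ r₂'
        _ ≤ ENNReal.ofReal ((K : ℝ) * r₁) ^ n := by gcongr
        _ = ((K : ℝ≥0∞) * ENNReal.ofReal r₁) ^ n := by
            rw [ENNReal.ofReal_mul K.coe_nonneg, ENNReal.ofReal_coe_nnreal]
        _ = (K : ℝ≥0∞) ^ n * volume (euCube c₁ r₁) := by rw [mul_pow, vol_euCube]
        _ ≤ (K : ℝ≥0∞) ^ n * volume (Φ ⁻¹' Q) := mul_le_mul_right (measure_mono hsub₁) _
        _ ≤ (K : ℝ≥0∞) ^ n * (C₁ * volume Q) := mul_le_mul_right (hvol c r hr) _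
        _ = (K : ℝ≥0∞) ^ n * C₁ * volume Q := (mul_assoc _ _ _).symm
    have hratio : volume Q2 / volume Q ≤ (K : ℝ≥0∞) ^ n * C₁ :=
      (ENNReal.div_le_iff hvQ0 hvQtop).mpr (by rw [mul_assoc] at hchain ⊢; exact hchain)
    have key : ∀ a : ℝ≥0∞, a / volume Q = a / volume Q2 * (volume Q2 / volume Q) := by
      intro a
      rw [div_eq_mul_inv, div_eq_mul_inv, div_eq_mul_inv, mul_assoc,
        ← mul_assoc (volume Q2)⁻¹, ENNReal.inv_mul_cancel hvQ20 hvQ2top, one_mul]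
    have hA2 : σ Q2 / volume Q2 * (ω Q2 / volume Q2) ≤ A2char σ ω :=
      le_iSup_of_le c₂ (le_iSup_of_le r₂' (le_iSup_of_le hr₂'pos le_rfl))
    calc Measure.map Φ σ Q / volume Q * (Measure.map Φ ω Q / volume Q)
        = σ (Φ ⁻¹' Q) / volume Q * (ω (Φ ⁻¹' Q) / volume Q) := by
          rw [Measure.map_apply hΦ (measurableSet_euCube c r),
            Measure.map_apply hΦ (measurableSet_euCube c r)]
      _ ≤ σ Q2 / volume Q * (ω Q2 / volume Q) := by
          gcongr
      _ = (σ Q2 / volume Q2 * (ω Q2 / volume Q2)) *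
            ((volume Q2 / volume Q) * (volume Q2 / volume Q)) := by
          rw [key (σ Q2), key (ω Q2)]; rw [mul_mul_mul_comm]
      _ ≤ A2char σ ω * (((K : ℝ≥0∞) ^ n * C₁) * ((K : ℝ≥0∞) ^ n * C₁)) := by
          gcongr
      _ = C₁ ^ 2 * (K : ℝ≥0∞) ^ (2 * n) * A2char σ ω := by
          rw [two_mul, pow_add, sq]; ring
  · -- part (b)
    rintro ⟨C, hC0, hCtop, hC⟩
    have hA2vol : A2char (volume : Measure (EuclideanSpace ℝ (Fin n))) volume ≤ 1 := by
      refine iSup_le fun c => iSup_le fun r => iSup_le fun hr => ?_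
      rw [ENNReal.div_self (vol_euCube_ne_zero c hr) (vol_euCube_ne_top c r), one_mul]
    refine ⟨max 1 C, lt_of_lt_of_le zero_lt_one (le_max_left _ _),
      max_lt one_lt_top hCtop, fun c r hr => ?_⟩
    have h1 := hC volume volume inferInstance inferInstance
    have hterm : volume (Φ ⁻¹' euCube c r) / volume (euCube c r) *
        (volume (Φ ⁻¹' euCube c r) / volume (euCube c r)) ≤ C := by
      have hle : volume (Φ ⁻¹' euCube c r) / volume (euCube c r) *
          (volume (Φ ⁻¹' euCube c r) / volume (euCube c r)) ≤
          A2char (Measure.map Φ volume) (Measure.map Φ volume) := by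
        have h2 : (Measure.map Φ volume (euCube c r) / volume (euCube c r)) *
            (Measure.map Φ volume (euCube c r) / volume (euCube c r)) ≤
            A2char (Measure.map Φ volume) (Measure.map Φ volume) :=
          le_iSup_of_le c (le_iSup_of_le r (le_iSup_of_le hr le_rfl))
        rwa [Measure.map_apply hΦ (measurableSet_euCube c r)] at h2
      calc _ ≤ A2char (Measure.map Φ volume) (Measure.map Φ volume) := hle
        _ ≤ C * A2char (volume : Measure (EuclideanSpace ℝ (Fin n))) volume := h1
        _ ≤ C * 1 := mul_le_mul_right hA2vol C
        _ = C := mul_one C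
    have ha : volume (Φ ⁻¹' euCube c r) / volume (euCube c r) ≤ max 1 C := by
      rcases le_or_gt (volume (Φ ⁻¹' euCube c r) / volume (euCube c r)) 1 with h | h
      · exact h.trans (le_max_left _ _)
      · refine le_trans ?_ (le_max_right 1 C)
        calc volume (Φ ⁻¹' euCube c r) / volume (euCube c r)
            = 1 * (volume (Φ ⁻¹' euCube c r) / volume (euCube c r)) := (one_mul _).symm
          _ ≤ volume (Φ ⁻¹' euCube c r) / volume (euCube c r) *
              (volume (Φ ⁻¹' euCube c r) / volume (euCube c r)) := mul_le_mul_left h.le _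
          _ ≤ C := hterm
    exact (ENNReal.div_le_iff (vol_euCube_ne_zero c hr) (vol_euCube_ne_top c r)).mp ha
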